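/- Let M = (M_k) be any positive sequence. Then the Roumieu sequence space F^{{M}} equals the intersection of the Beurling spaces F^{(L)} over all positive sequences L with M ◁ L, and also equals the intersection of the Roumieu spaces F^{{L}} over all positive sequences L with M ◁ L. More precisely, for any real sequence f = (f_k) with f ∉ F^{{M}}, there exists a positive sequence L with M ◁ L and f ∉ F^{{L}}. -/

import Mathlib

/-- The sequence space `F^M_ρ`. -/
def seqSpace (M : ℕ → ℝ) (ρ : ℝ) : Set (ℕ → ℝ) :=
  {f | ∃ C > (0 : ℝ), ∀ k : ℕ, |f k| ≤ C * ρ ^ k * (Nat.factorial k) * M k}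

/-- The Roumieu sequence space `F^{{M}} = ⋃_{ρ>0} F^M_ρ`. -/
def seqSpaceRoumieu (M : ℕ → ℝ) : Set (ℕ → ℝ) :=
  ⋃ ρ > (0 : ℝ), seqSpace M ρ

/-- The Beurling sequence space `F^{(M)} = ⋂_{ρ>0} F^M_ρ`. -/
def seqSpaceBeurling (M : ℕ → ℝ) : Set (ℕ → ℝ) :=
  ⋂ ρ > (0 : ℝ), seqSpace M ρ

/-- `M ◁ L`. -/
def seqLhd (M L : ℕ → ℝ) : Prop :=
  ∀ ρ > (0 : ℝ), ∃ C > (0 : ℝ), ∀ k : ℕ, M k ≤ C * ρ ^ k * L k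

lemma mem_roumieu {M : ℕ → ℝ} {f : ℕ → ℝ} :
    f ∈ seqSpaceRoumieu M ↔ ∃ ρ > (0:ℝ), ∃ C > (0:ℝ),
      ∀ k : ℕ, |f k| ≤ C * ρ ^ k * (Nat.factorial k) * M k := by
  simp [seqSpaceRoumieu, seqSpace]

lemma mem_beurling {M : ℕ → ℝ} {f : ℕ → ℝ} :
    f ∈ seqSpaceBeurling M ↔ ∀ ρ > (0:ℝ), ∃ C > (0:ℝ),
      ∀ k : ℕ, |f k| ≤ C * ρ ^ k * (Nat.factorial k) * M k := by
  simp [seqSpaceBeurling, seqSpace]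

lemma escape (M : ℕ → ℝ) (hpos : ∀ k, 0 < M k) (f : ℕ → ℝ)
    (hf : ∀ ρ > (0:ℝ), ∀ C > (0:ℝ), ∃ k : ℕ, C * ρ ^ k * (Nat.factorial k) * M k < |f k|) :
    ∀ ρ > (0:ℝ), ∀ C > (0:ℝ), ∀ N : ℕ, ∃ k : ℕ,
      N < k ∧ C * ρ ^ k * (Nat.factorial k) * M k < |f k| := by
  intro ρ hρ C hC N
  set C' : ℝ := C + ∑ j ∈ Finset.range (N+1), |f j| / (ρ ^ j * (Nat.factorial j) * M j) with hC'
  have hsum : (0:ℝ) ≤ ∑ j ∈ Finset.range (N+1), |f j| / (ρ ^ j * (Nat.factorial j) * M j) := by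
    apply Finset.sum_nonneg
    intro j _
    have := hpos j
    positivity
  have hC'pos : 0 < C' := by rw [hC']; linarith
  obtain ⟨k, hk⟩ := hf ρ hρ C' hC'pos
  have hMk := hpos k
  have hd : 0 < ρ ^ k * (Nat.factorial k) * M k := by positivity
  refine ⟨k, ?_, ?_⟩
  · by_contra h
    push_neg at h
    have h1 : |f k| / (ρ ^ k * (Nat.factorial k) * M k)
        ≤ ∑ j ∈ Finset.range (N+1), |f j| / (ρ ^ j * (Nat.factorial j) * M j) := by
      apply Finset.single_le_sum (f := fun j => |f j| / (ρ ^ j * (Nat.factorial j) * M j))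
        (fun j _ => by have := hpos j; positivity)
      simpa using Nat.lt_succ_of_le h
    rw [div_le_iff₀ hd] at h1
    have hSC : (∑ j ∈ Finset.range (N+1), |f j| / (ρ ^ j * (Nat.factorial j) * M j)) ≤ C' := by
      rw [hC']; linarith
    have h2 : |f k| ≤ C' * (ρ ^ k * (Nat.factorial k) * M k) :=
      h1.trans (mul_le_mul_of_nonneg_right hSC hd.le)
    linarith [hk, h2]
  · have h3 : C * (ρ ^ k * (Nat.factorial k) * M k) ≤ C' * (ρ ^ k * (Nat.factorial k) * M k) :=
      mul_le_mul_of_nonneg_right (by rw [hC']; linarith) hd.le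
    linarith [hk, h3]

lemma key (M : ℕ → ℝ) (hpos : ∀ k, 0 < M k) (f : ℕ → ℝ) (hf : f ∉ seqSpaceRoumieu M) :
    ∃ L : ℕ → ℝ, (∀ k, 0 < L k) ∧ seqLhd M L ∧ f ∉ seqSpaceRoumieu L := by
  have hf' : ∀ ρ > (0:ℝ), ∀ C > (0:ℝ), ∃ k : ℕ,
      C * ρ ^ k * (Nat.factorial k) * M k < |f k| := by
    rw [mem_roumieu] at hf
    push_neg at hf
    exact hf
  have esc := escape M hpos f hf'
  have step : ∀ n N : ℕ, ∃ k : ℕ, N < k ∧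
      ((n:ℝ)+2) * (((n:ℝ)+2)^2) ^ k * (Nat.factorial k) * M k < |f k| := by
    intro n N
    exact esc (((n:ℝ)+2)^2) (by positivity) ((n:ℝ)+2) (by positivity) N
  choose F hF1 hF2 using step
  set K : ℕ → ℕ := fun n => Nat.rec 0 (fun m ih => F m ih) n with hK
  have hKsucc : ∀ n, K (n+1) = F n (K n) := fun n => rfl
  have hKmono : StrictMono K :=
    strictMono_nat_of_lt_succ (fun n => by rw [hKsucc]; exact hF1 n (K n))
  have hKprop : ∀ n : ℕ, ((n:ℝ)+2) * (((n:ℝ)+2)^2) ^ (K (n+1)) * (Nat.factorial (K (n+1)))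
      * M (K (n+1)) < |f (K (n+1))| := fun n => by rw [hKsucc]; exact hF2 n (K n)
  set ν : ℕ → ℕ := fun k => Nat.findGreatest (fun m => K m ≤ k) k with hν
  set g : ℕ → ℝ := fun k => ((ν k : ℝ) + 1) ^ k with hg
  have hgpos : ∀ k, 0 < g k := fun k => by positivity
  have hg1 : ∀ k, 1 ≤ g k := fun k =>
    one_le_pow₀ (by have : (0:ℝ) ≤ (ν k : ℝ) := Nat.cast_nonneg _; linarith)
  have hν_ge : ∀ n k, K n ≤ k → n ≤ ν k := fun n k h =>
    Nat.le_findGreatest (le_trans hKmono.le_apply h) h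
  have hνK : ∀ m, ν (K m) = m := by
    intro m
    refine le_antisymm ?_ (hν_ge m (K m) le_rfl)
    have hspec : K (ν (K m)) ≤ K m :=
      Nat.findGreatest_spec (P := fun m' => K m' ≤ K m) (n := K m) (m := 0)
        (Nat.zero_le _) (show K 0 ≤ K m from Nat.zero_le _)
    exact hKmono.le_iff_le.mp hspec
  refine ⟨fun k => M k * g k, fun k => mul_pos (hpos k) (hgpos k), ?_, ?_⟩
  · -- seqLhd M L
    intro ρ hρ
    set n₀ : ℕ := ⌈1/ρ⌉₊ with hn₀
    have hlow : ∀ k, K n₀ ≤ k → 1 ≤ ρ ^ k * g k := by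
      intro k hk
      have h1 : (1/ρ : ℝ) ≤ ((ν k : ℝ) + 1) := by
        have h2 : (n₀ : ℝ) ≤ (ν k : ℝ) := by exact_mod_cast hν_ge n₀ k hk
        have h3 : (1/ρ : ℝ) ≤ (n₀ : ℝ) := Nat.le_ceil _
        linarith
      have h4 : 1 ≤ ρ * ((ν k : ℝ) + 1) := by
        rw [div_le_iff₀ hρ] at h1
        linarith [h1]
      calc (1:ℝ) = 1 ^ k := (one_pow k).symm
        _ ≤ (ρ * ((ν k : ℝ) + 1)) ^ k := pow_le_pow_left₀ one_pos.le h4 k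
        _ = ρ ^ k * g k := by rw [mul_pow, hg]
    set C : ℝ := 1 + ∑ j ∈ Finset.range (K n₀), 1 / (ρ ^ j * g j) with hCdef
    have hsum0 : (0:ℝ) ≤ ∑ j ∈ Finset.range (K n₀), 1 / (ρ ^ j * g j) := by
      apply Finset.sum_nonneg
      intro j _
      have := hgpos j
      positivity
    have hC1 : 1 ≤ C := by rw [hCdef]; linarith
    refine ⟨C, by linarith, ?_⟩
    intro k
    have hkey : 1 ≤ C * (ρ ^ k * g k) := by
      rcases lt_or_ge k (K n₀) with h | h
      · have h1 : 1 / (ρ ^ k * g k) ≤ ∑ j ∈ Finset.range (K n₀), 1 / (ρ ^ j * g j) := by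
          apply Finset.single_le_sum (f := fun j => 1 / (ρ ^ j * g j))
            (fun j _ => by have := hgpos j; positivity)
          simpa using h
        have hd : 0 < ρ ^ k * g k := by have := hgpos k; positivity
        rw [div_le_iff₀ hd] at h1
        have : (∑ j ∈ Finset.range (K n₀), 1 / (ρ ^ j * g j)) * (ρ ^ k * g k)
            ≤ C * (ρ ^ k * g k) :=
          mul_le_mul_of_nonneg_right (by rw [hCdef]; linarith) hd.le
        exact h1.trans this
      · have := hlow k h
        nlinarith
    have hMk := hpos k
    show M k ≤ C * ρ ^ k * (M k * g k)
    have h5 := mul_le_mul_of_nonneg_right hkey hMk.le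
    nlinarith [h5, hMk]
  · -- f ∉ Roumieu L
    intro hmem
    rw [mem_roumieu] at hmem
    obtain ⟨ρ, hρ, C, hC, hb⟩ := hmem
    set n : ℕ := max ⌈ρ⌉₊ ⌈C⌉₊ with hn
    have hρb : ρ ≤ (n:ℝ) + 2 := by
      have := Nat.le_ceil ρ
      have h2 : (⌈ρ⌉₊ : ℝ) ≤ (n:ℝ) := by exact_mod_cast le_max_left _ _
      linarith
    have hCb : C < (n:ℝ) + 2 := by
      have := Nat.le_ceil C
      have h2 : (⌈C⌉₊ : ℝ) ≤ (n:ℝ) := by exact_mod_cast le_max_right _ _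
      linarith
    set k : ℕ := K (n+1) with hk
    have hA := hKprop n
    have hgk : g k = ((n:ℝ) + 2) ^ k := by
      rw [hg]
      simp only [hk, hνK (n+1)]
      push_cast
      ring_nf
    have hbk := hb k
    rw [hgk] at hbk
    have hMk := hpos k
    have hfac : (0:ℝ) < (Nat.factorial k : ℝ) := by positivity
    have hpowpos : (0:ℝ) < ((n:ℝ) + 2) ^ k := by positivity
    have hchain : C * ρ ^ k * (Nat.factorial k) * (M k * ((n:ℝ) + 2) ^ k)
        < ((n:ℝ)+2) * (((n:ℝ)+2)^2) ^ k * (Nat.factorial k) * M k := by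
      have h1 : C * ρ ^ k ≤ C * ((n:ℝ)+2) ^ k :=
        mul_le_mul_of_nonneg_left (pow_le_pow_left₀ hρ.le hρb k) hC.le
      have h2 : C * ((n:ℝ)+2) ^ k < ((n:ℝ)+2) * ((n:ℝ)+2) ^ k :=
        mul_lt_mul_of_pos_right hCb hpowpos
      have h3 : C * ρ ^ k < ((n:ℝ)+2) * ((n:ℝ)+2) ^ k := lt_of_le_of_lt h1 h2
      calc C * ρ ^ k * (Nat.factorial k) * (M k * ((n:ℝ) + 2) ^ k)
          = (C * ρ ^ k) * ((Nat.factorial k) * M k * ((n:ℝ) + 2) ^ k) := by ring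
        _ < (((n:ℝ)+2) * ((n:ℝ)+2) ^ k) * ((Nat.factorial k) * M k * ((n:ℝ) + 2) ^ k) := by
            apply mul_lt_mul_of_pos_right h3
            positivity
        _ = ((n:ℝ)+2) * (((n:ℝ)+2)^2) ^ k * (Nat.factorial k) * M k := by
            rw [show ((((n:ℝ)+2)^2) ^ k) = ((n:ℝ)+2) ^ k * ((n:ℝ)+2) ^ k by
              rw [← pow_mul, two_mul, pow_add]]
            ring
    linarith [hA, hbk, hchain]


/-- For any positive sequence `M`, the Roumieu space is the intersection of all
Beurling (equivalently, all Roumieu) spaces `F^{(L)}` (resp. `F^{{L}}`) over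
positive `L` with `M ◁ L`; more precisely, every `f ∉ F^{{M}}` lies outside
some `F^{{L}}` with `M ◁ L`. -/
theorem seqSpaceRoumieu_eq_iInter (M : ℕ → ℝ) (hpos : ∀ k, 0 < M k) :
    (seqSpaceRoumieu M
        = ⋂ L ∈ {L : ℕ → ℝ | (∀ k, 0 < L k) ∧ seqLhd M L}, seqSpaceBeurling L)
    ∧ (seqSpaceRoumieu M
        = ⋂ L ∈ {L : ℕ → ℝ | (∀ k, 0 < L k) ∧ seqLhd M L}, seqSpaceRoumieu L)
    ∧ (∀ f : ℕ → ℝ, f ∉ seqSpaceRoumieu M →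
        ∃ L : ℕ → ℝ, (∀ k, 0 < L k) ∧ seqLhd M L ∧ f ∉ seqSpaceRoumieu L) := by

  have hsub : ∀ f ∈ seqSpaceRoumieu M, ∀ L : ℕ → ℝ, (∀ k, 0 < L k) → seqLhd M L →
      f ∈ seqSpaceBeurling L := by
    intro f hfm L hLpos hML
    rw [mem_roumieu] at hfm
    obtain ⟨ρ₀, hρ₀, C₀, hC₀, h0⟩ := hfm
    rw [mem_beurling]
    intro ρ hρ
    obtain ⟨C₁, hC₁, h1⟩ := hML (ρ/ρ₀) (by positivity)
    refine ⟨C₀ * C₁, by positivity, fun k => ?_⟩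
    have hρ₀' : ρ₀ ≠ 0 := ne_of_gt hρ₀
    calc |f k| ≤ C₀ * ρ₀ ^ k * (Nat.factorial k) * M k := h0 k
      _ ≤ C₀ * ρ₀ ^ k * (Nat.factorial k) * (C₁ * (ρ/ρ₀) ^ k * L k) := by
          have hfk : (0:ℝ) ≤ C₀ * ρ₀ ^ k * (Nat.factorial k) := by positivity
          exact mul_le_mul_of_nonneg_left (h1 k) hfk
      _ = C₀ * C₁ * ρ ^ k * (Nat.factorial k) * L k := by
          rw [div_pow]
          field_simp
  have hBR : ∀ (L : ℕ → ℝ) (f : ℕ → ℝ), f ∈ seqSpaceBeurling L → f ∈ seqSpaceRoumieu L := by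
    intro L f hf
    exact mem_roumieu.2 ⟨1, one_pos, mem_beurling.1 hf 1 one_pos⟩
  refine ⟨?_, ?_, fun f hf => key M hpos f hf⟩
  · ext f
    constructor
    · intro hfm
      rw [Set.mem_iInter₂]
      intro L hL
      exact hsub f hfm L hL.1 hL.2
    · intro hfi
      by_contra hfm
      obtain ⟨L, hL1, hL2, hL3⟩ := key M hpos f hfm
      have hmem := Set.mem_iInter₂.1 hfi L ⟨hL1, hL2⟩
      exact hL3 (hBR L f hmem)
  · ext f
    constructor
    · intro hfm
      rw [Set.mem_iInter₂]
      intro L hL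
      exact hBR L f (hsub f hfm L hL.1 hL.2)
    · intro hfi
      by_contra hfm
      obtain ⟨L, hL1, hL2, hL3⟩ := key M hpos f hfm
      exact hL3 (Set.mem_iInter₂.1 hfi L ⟨hL1, hL2⟩)
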